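/- Let U be a finite submodular universe of separations and 𝒫 a robust set of profiles in U. Then there is a nested set T ⊆ U of separations such that: (i) every two distinguishable profiles in 𝒫 are efficiently distinguished by some separation in T; (ii) every separation in T efficiently distinguishes a pair of profiles in 𝒫; and (iii) if all the profiles in 𝒫 are regular, then T is a regular tree set. -/
import Mathlib


/-!
Non-canonical tangle-tree theorem for submodular universes of separations:
for every robust set of profiles in a finite submodular universe `U` there is
a nested set `T ⊆ U` efficiently distinguishing all distinguishable profiles,
all of whose members efficiently distinguish a pair of profiles, and which is
a regular tree set provided all profiles are regular.
-/

variable {U : Type*}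

/-- `star` is an order-reversing involution: `s** = s` and `r ≤ s ↔ s* ≤ r*`. -/
def OrderReversingInvolution [Lattice U] (star : U → U) : Prop :=
  (∀ s : U, star (star s) = s) ∧ ∀ r s : U, r ≤ s ↔ star s ≤ star r

/-- Two separations are nested if they have comparable orientations. -/
def Nested [Lattice U] (star : U → U) (r s : U) : Prop :=
  r ≤ s ∨ r ≤ star s ∨ star r ≤ s ∨ star r ≤ star s

/-- `O` is an orientation of `S`: it contains, for each `s ∈ S`, exactly one
of `s` and `star s`. -/
def Orients [Lattice U] (star : U → U) (S O : Set U) : Prop :=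
  O ⊆ S ∧ ∀ s ∈ S, (s ∈ O ∨ star s ∈ O) ∧ (s ∈ O → star s ∈ O → s = star s)

/-- `O` is consistent: there are no `r, s ∈ O` with `star r < s`. -/
def Consistent [Lattice U] (star : U → U) (O : Set U) : Prop :=
  ∀ r ∈ O, ∀ s ∈ O, ¬ star r < s

/-- A profile of `S` is a consistent orientation `P` of `S` such that for all
`r, s ∈ P` we have `star r ⊓ star s ∉ P`. -/
def IsProfile [Lattice U] (star : U → U) (S P : Set U) : Prop :=
  Orients star S P ∧ Consistent star P ∧
    ∀ r ∈ P, ∀ s ∈ P, star r ⊓ star s ∉ P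

/-- A profile in `U` (with order function `f`) is a `k`-profile for some
integer `k`, i.e. a profile of `S_k = {s | f s < k}`. -/
def IsProfileIn [Lattice U] (star : U → U) (f : U → ℝ) (P : Set U) : Prop :=
  ∃ k : ℤ, IsProfile star {s : U | f s < (k : ℝ)} P

/-- `s` distinguishes `P` and `P'`: one orientation of `s` lies in `P` and the
other in `P'`. -/
def Distinguishes [Lattice U] (star : U → U) (s : U) (P P' : Set U) : Prop :=
  (s ∈ P ∧ star s ∈ P') ∨ (star s ∈ P ∧ s ∈ P')

/-- `s` distinguishes `P` and `P'` efficiently: it does so and has minimum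
order among all separations distinguishing `P` and `P'`. -/
def EffDist [Lattice U] (star : U → U) (f : U → ℝ) (s : U) (P P' : Set U) : Prop :=
  Distinguishes star s P P' ∧ ∀ t : U, Distinguishes star t P P' → f s ≤ f t

/-- A profile `P` is robust if there are no `r, s` with `star r ∈ P`,
`r ⊓ s ∈ P`, `r ⊓ star s ∈ P`, `f (r ⊓ s) < f r` and `f (r ⊓ star s) < f r`. -/
def RobustProfile [Lattice U] (star : U → U) (f : U → ℝ) (P : Set U) : Prop :=
  ¬ ∃ r s : U, star r ∈ P ∧ r ⊓ s ∈ P ∧ r ⊓ star s ∈ P ∧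
      f (r ⊓ s) < f r ∧ f (r ⊓ star s) < f r

section Lemmas

variable [Lattice U] {star : U → U} {f : U → ℝ}

lemma le_star_iff (h : OrderReversingInvolution star) {r s : U} :
    r ≤ star s ↔ s ≤ star r := by
  constructor
  · intro hle
    have := (h.2 r (star s)).mp hle
    rwa [h.1] at this
  · intro hle
    have := (h.2 s (star r)).mp hle
    rwa [h.1] at this

lemma starLeStarIff (h : OrderReversingInvolution star) {r s : U} :
    star r ≤ star s ↔ s ≤ r := (h.2 s r).symm

lemma star_sup (h : OrderReversingInvolution star) (r s : U) :
    star (r ⊔ s) = star r ⊓ star s := by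
  apply le_antisymm
  · exact le_inf ((h.2 r (r ⊔ s)).mp le_sup_left) ((h.2 s (r ⊔ s)).mp le_sup_right)
  · have h1 : r ⊔ s ≤ star (star r ⊓ star s) :=
      sup_le ((le_star_iff h).mpr inf_le_left) ((le_star_iff h).mpr inf_le_right)
    have := (h.2 (r ⊔ s) (star (star r ⊓ star s))).mp h1
    rwa [h.1] at this

lemma star_inf (h : OrderReversingInvolution star) (r s : U) :
    star (r ⊓ s) = star r ⊔ star s := by
  have h2 := star_sup h (star r) (star s)
  rw [h.1, h.1] at h2
  rw [← h2, h.1]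

lemma nested_refl (a : U) : Nested star a a := Or.inl le_rfl

lemma nested_symm (h : OrderReversingInvolution star) {a b : U}
    (hab : Nested star a b) : Nested star b a := by
  rcases hab with h1 | h1 | h1 | h1
  · exact Or.inr (Or.inr (Or.inr ((h.2 a b).mp h1)))
  · exact Or.inr (Or.inl ((le_star_iff h).mp h1))
  · exact Or.inr (Or.inr (Or.inl (by
      have := (h.2 (star a) b).mp h1
      rwa [h.1] at this)))
  · exact Or.inl (by
      have := (starLeStarIff h).mp h1
      exact this)

lemma nested_star_right (h : OrderReversingInvolution star) {a b : U} :
    Nested star a b ↔ Nested star a (star b) := by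
  unfold Nested
  rw [h.1 b]
  tauto

lemma nested_star_left (h : OrderReversingInvolution star) {a b : U} :
    Nested star a b ↔ Nested star (star a) b := by
  unfold Nested
  rw [h.1 a]
  tauto

lemma nested_corner (h : OrderReversingInvolution star) {u r s : U}
    (hur : Nested star u r) (hus : Nested star u s) (hrs : ¬ r ≤ star s) :
    Nested star u (r ⊔ s) := by
  rcases hur with h1 | h1 | h1 | h1
  · exact Or.inl (h1.trans le_sup_left)
  · rcases hus with h2 | h2 | h2 | h2
    · exact Or.inl (h2.trans le_sup_right)
    · exact Or.inr (Or.inl (by rw [star_sup h]; exact le_inf h1 h2))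
    · exact Or.inr (Or.inr (Or.inl (h2.trans le_sup_right)))
    · -- h1 : u ≤ star r, h2 : star u ≤ star s ⇒ s ≤ u ≤ star r ⇒ r ≤ star s
      exact absurd ((le_star_iff h).mp (((starLeStarIff h).mp h2).trans h1)) hrs
  · exact Or.inr (Or.inr (Or.inl (h1.trans le_sup_left)))
  · rcases hus with h2 | h2 | h2 | h2
    · exact Or.inl (h2.trans le_sup_right)
    · -- h1 : star u ≤ star r ⇒ r ≤ u ; h2 : u ≤ star s ⇒ r ≤ star s
      exact absurd (((starLeStarIff h).mp h1).trans h2) hrs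
    · exact Or.inr (Or.inr (Or.inl (h2.trans le_sup_right)))
    · exact Or.inr (Or.inr (Or.inr (by rw [star_sup h]; exact le_inf h1 h2)))

lemma dist_comm' {s : U} {P P' : Set U} :
    Distinguishes star s P P' ↔ Distinguishes star s P' P := by
  unfold Distinguishes; tauto

lemma dist_star (h : OrderReversingInvolution star) {s : U} {P P' : Set U} :
    Distinguishes star (star s) P P' ↔ Distinguishes star s P P' := by
  unfold Distinguishes
  rw [h.1 s]
  tauto

lemma effdist_comm {s : U} {P P' : Set U} (hs : EffDist star f s P P') :
    EffDist star f s P' P :=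
  ⟨dist_comm'.mp hs.1, fun t ht => hs.2 t (dist_comm'.mp ht)⟩

lemma effdist_star (h : OrderReversingInvolution star) (hfstar : ∀ s : U, f (star s) = f s)
    {s : U} {P P' : Set U} :
    EffDist star f (star s) P P' ↔ EffDist star f s P P' := by
  constructor
  · rintro ⟨hd, hm⟩
    exact ⟨(dist_star h).mp hd, fun t ht => by rw [← hfstar s]; exact hm t ht⟩
  · rintro ⟨hd, hm⟩
    exact ⟨(dist_star h).mpr hd, fun t ht => by rw [hfstar s]; exact hm t ht⟩

/-- If `x` has an orientation in a profile `P` then `f x` is below its order bound. -/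
lemma mem_lt_of_profile {k : ℤ} {P : Set U} (hP : IsProfile star {s : U | f s < (k : ℝ)} P)
    {x : U} (hx : x ∈ P) : f x < (k : ℝ) := hP.1.1 hx

/-- Both corners `r ⊓ s` lie in the side of `r` whenever this corner has
small order (robustness helper). -/
lemma meet_both (h : OrderReversingInvolution star) (hfstar : ∀ s : U, f (star s) = f s)
    {Pa Pb : Set U} (hPa : IsProfileIn star f Pa) (hPb : IsProfileIn star f Pb)
    {r x : U} (heff : EffDist star f r Pa Pb) (hra : star r ∈ Pa) (hrb : r ∈ Pb)
    (hfx : f (r ⊓ x) < f r) (hnx : ¬ r ≤ x) : r ⊓ x ∈ Pa := by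
  obtain ⟨ka, hka⟩ := hPa
  obtain ⟨kb, hkb⟩ := hPb
  have hfa : f r < (ka : ℝ) := by
    have := mem_lt_of_profile hka hra
    rwa [hfstar] at this
  have hfb : f r < (kb : ℝ) := mem_lt_of_profile hkb hrb
  have hb : r ⊓ x ∈ Pb := by
    rcases (hkb.1.2 (r ⊓ x) (show f (r ⊓ x) < (kb : ℝ) from hfx.trans hfb)).1 with h1 | h1
    · exact h1
    · exfalso
      refine hkb.2.1 r hrb _ h1 ?_
      rw [star_inf h]
      refine lt_of_le_of_ne le_sup_left fun he => hnx ?_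
      have : star x ≤ star r := le_sup_right.trans he.ge
      exact (starLeStarIff h).mp this
  rcases (hka.1.2 (r ⊓ x) (show f (r ⊓ x) < (ka : ℝ) from hfx.trans hfa)).1 with h1 | h1
  · exact h1
  · exfalso
    have hd : Distinguishes star (r ⊓ x) Pa Pb := Or.inr ⟨h1, hb⟩
    exact absurd (heff.2 _ hd) (not_le.mpr hfx)

/-- Corner membership: if `r` lies in both profiles and `s` distinguishes them,
then the corner `r ⊔ s` (of order at most `f s`) also distinguishes them. -/
lemma corner_mem (h : OrderReversingInvolution star) (hfstar : ∀ s : U, f (star s) = f s)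
    {Q Q' : Set U} (hQ : IsProfileIn star f Q) (hQ' : IsProfileIn star f Q')
    {r s : U} (hrQ : r ∈ Q) (hrQ' : r ∈ Q') (hsQ : s ∈ Q) (hsQ' : star s ∈ Q')
    (hfc : f (r ⊔ s) ≤ f s) (hns : ¬ r ≤ s) :
    r ⊔ s ∈ Q ∧ star (r ⊔ s) ∈ Q' := by
  obtain ⟨kQ, hkQ⟩ := hQ
  obtain ⟨kQ', hkQ'⟩ := hQ'
  have hfsQ : f s < (kQ : ℝ) := mem_lt_of_profile hkQ hsQ
  have hfsQ' : f s < (kQ' : ℝ) := by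
    have := mem_lt_of_profile hkQ' hsQ'
    rwa [hfstar] at this
  constructor
  · rcases (hkQ.1.2 (r ⊔ s) (show f (r ⊔ s) < (kQ : ℝ) from hfc.trans_lt hfsQ)).1 with h1 | h1
    · exact h1
    · exfalso
      have := hkQ.2.2 r hrQ s hsQ
      rw [← star_sup h] at this
      exact this h1
  · rcases (hkQ'.1.2 (r ⊔ s) (show f (r ⊔ s) < (kQ' : ℝ) from hfc.trans_lt hfsQ')).1 with h1 | h1
    · exfalso
      refine hkQ'.2.1 (star s) hsQ' _ h1 ?_
      rw [h.1]
      refine lt_of_le_of_ne le_sup_right fun he => hns (he ▸ le_sup_left)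
    · exact h1

/-- The key uncrossing lemma ("fish lemma" with robustness): if `r` efficiently
distinguishes a robust pair, `s` efficiently distinguishes `Q, Q'`, `f r ≤ f s`,
`r` crosses `s`, and `Q, Q'` orient `r` the same way, then one of the corners
`r ⊔ s`, `r ⊔ star s` also efficiently distinguishes `Q, Q'`. -/
lemma corner_effdist (h : OrderReversingInvolution star)
    (hfstar : ∀ s : U, f (star s) = f s)
    (hfsub : ∀ r s : U, f (r ⊔ s) + f (r ⊓ s) ≤ f r + f s)
    {Pa Pb Q Q' : Set U}
    (hPa : IsProfileIn star f Pa) (hPb : IsProfileIn star f Pb)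
    (hQ : IsProfileIn star f Q) (hQ' : IsProfileIn star f Q')
    (hrobA : RobustProfile star f Pa) (hrobB : RobustProfile star f Pb)
    {r s : U} (hr : EffDist star f r Pa Pb) (hs : EffDist star f s Q Q')
    (hrs : f r ≤ f s) (hcross : ¬ Nested star r s)
    (hrQ : r ∈ Q) (hrQ' : r ∈ Q') (hsQ : s ∈ Q) (hsQ' : star s ∈ Q') :
    EffDist star f (r ⊔ s) Q Q' ∨ EffDist star f (r ⊔ star s) Q Q' := by
  have h1 : ¬ r ≤ s := fun hle => hcross (Or.inl hle)
  have h2 : ¬ r ≤ star s := fun hle => hcross (Or.inr (Or.inl hle))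
  by_cases hc1 : f (r ⊔ s) ≤ f s
  · left
    obtain ⟨m1, m2⟩ := corner_mem h hfstar hQ hQ' hrQ hrQ' hsQ hsQ' hc1 h1
    exact ⟨Or.inl ⟨m1, m2⟩, fun t ht => hc1.trans (hs.2 t ht)⟩
  by_cases hc2 : f (r ⊔ star s) ≤ f s
  · right
    have hssQ : star (star s) ∈ Q := by rw [h.1]; exact hsQ
    obtain ⟨m1, m2⟩ := corner_mem h hfstar hQ' hQ hrQ' hrQ hsQ' hssQ
      (by rwa [hfstar]) h2
    exact ⟨Or.inr ⟨m2, m1⟩, fun t ht => hc2.trans (hs.2 t ht)⟩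
  · exfalso
    push_neg at hc1 hc2
    have hm1 : f (r ⊓ s) < f r := by
      linarith only [hfsub r s, hc1]
    have hm2 : f (r ⊓ star s) < f r := by
      have h3 := hfsub r (star s)
      rw [hfstar] at h3
      linarith only [h3, hc2]
    rcases hr.1 with ⟨hA, hB⟩ | ⟨hA, hB⟩
    · -- r ∈ Pa, star r ∈ Pb : apply robustness to Pb
      have e1 : r ⊓ s ∈ Pb := meet_both h hfstar hPb hPa (effdist_comm hr) hB hA hm1 h1
      have e2 : r ⊓ star s ∈ Pb := meet_both h hfstar hPb hPa (effdist_comm hr) hB hA hm2 h2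
      exact hrobB ⟨r, s, hB, e1, e2, hm1, hm2⟩
    · -- star r ∈ Pa, r ∈ Pb : apply robustness to Pa
      have e1 : r ⊓ s ∈ Pa := meet_both h hfstar hPa hPb hr hA hB hm1 h1
      have e2 : r ⊓ star s ∈ Pa := meet_both h hfstar hPa hPb hr hA hB hm2 h2
      exact hrobA ⟨r, s, hA, e1, e2, hm1, hm2⟩

end Lemmas

section Part2

variable [Lattice U] {star : U → U} {f : U → ℝ}

/-- Packaged uncrossing: given `r` in both `Q, Q'` crossing an efficient
`Q`–`Q'` distinguisher `c`, there is a replacement `c'` which efficiently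
distinguishes `Q, Q'`, is nested with `r`, and is nested with everything
nested with both `r` and `c`. -/
lemma corner_full (h : OrderReversingInvolution star)
    (hfstar : ∀ s : U, f (star s) = f s)
    (hfsub : ∀ r s : U, f (r ⊔ s) + f (r ⊓ s) ≤ f r + f s)
    {Pa Pb Q Q' : Set U}
    (hPa : IsProfileIn star f Pa) (hPb : IsProfileIn star f Pb)
    (hQ : IsProfileIn star f Q) (hQ' : IsProfileIn star f Q')
    (hrobA : RobustProfile star f Pa) (hrobB : RobustProfile star f Pb)
    {r c : U} (hr : EffDist star f r Pa Pb) (hc : EffDist star f c Q Q')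
    (hrc : f r ≤ f c) (hx : ¬ Nested star r c) (hrQ : r ∈ Q) (hrQ' : r ∈ Q') :
    ∃ c', EffDist star f c' Q Q' ∧ Nested star r c' ∧
      ∀ u, Nested star u r → Nested star u c → Nested star u c' := by
  rcases hc.1 with ⟨hcQ, hcQ'⟩ | ⟨hcQ, hcQ'⟩
  · rcases corner_effdist h hfstar hfsub hPa hPb hQ hQ' hrobA hrobB hr hc hrc hx
      hrQ hrQ' hcQ hcQ' with he | he
    · exact ⟨r ⊔ c, he, Or.inl le_sup_left, fun u hur huc =>
        nested_corner h hur huc fun hle => hx (Or.inr (Or.inl hle))⟩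
    · refine ⟨r ⊔ star c, he, Or.inl le_sup_left, fun u hur huc =>
        nested_corner h hur ((nested_star_right h).mp huc) fun hle => hx (Or.inl ?_)⟩
      rwa [h.1] at hle
  · -- star c ∈ Q, c ∈ Q' : apply with s := star c
    have hc' : EffDist star f (star c) Q Q' := (effdist_star h hfstar).mpr hc
    have hrc' : f r ≤ f (star c) := by rwa [hfstar]
    have hx' : ¬ Nested star r (star c) := fun hn => hx ((nested_star_right h).mpr hn)
    have hssQ' : star (star c) ∈ Q' := by rw [h.1]; exact hcQ'
    rcases corner_effdist h hfstar hfsub hPa hPb hQ hQ' hrobA hrobB hr hc' hrc' hx'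
      hrQ hrQ' hcQ hssQ' with he | he
    · exact ⟨r ⊔ star c, he, Or.inl le_sup_left, fun u hur huc =>
        nested_corner h hur ((nested_star_right h).mp huc) fun hle => hx (Or.inl (by rwa [h.1] at hle))⟩
    · rw [h.1] at he
      exact ⟨r ⊔ c, he, Or.inl le_sup_left, fun u hur huc =>
        nested_corner h hur huc fun hle => hx (Or.inr (Or.inl hle))⟩

/-- Extension lemma: if every member of a nested set `T` efficiently
distinguishes some pair of profiles and has order at most the efficient order
of the distinguishable pair `Q, Q'`, then some efficient `Q`–`Q'`
distinguisher is nested with all of `T`. -/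
lemma extend [Fintype U] (h : OrderReversingInvolution star)
    (hfstar : ∀ s : U, f (star s) = f s)
    (hfsub : ∀ r s : U, f (r ⊔ s) + f (r ⊓ s) ≤ f r + f s)
    {Ps : Set (Set U)}
    (hprof : ∀ P ∈ Ps, IsProfileIn star f P)
    (hrobust : ∀ P ∈ Ps, RobustProfile star f P)
    (T : Set U) (hTnest : ∀ a ∈ T, ∀ b ∈ T, Nested star a b)
    {Q Q' : Set U} (hQ : Q ∈ Ps) (hQ' : Q' ∈ Ps)
    (hTlow : ∀ t ∈ T, (∃ Pa ∈ Ps, ∃ Pb ∈ Ps, EffDist star f t Pa Pb) ∧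
        ∀ v, Distinguishes star v Q Q' → f t ≤ f v)
    (hd : ∃ s, Distinguishes star s Q Q') :
    ∃ c, EffDist star f c Q Q' ∧ ∀ t ∈ T, Nested star c t := by
  obtain ⟨s0, hs0⟩ := hd
  obtain ⟨c0, hc0d, hc0m⟩ := Set.exists_min_image {v | Distinguishes star v Q Q'} f
    (Set.toFinite _) ⟨s0, hs0⟩
  obtain ⟨c, hcC, hcm⟩ := Set.exists_min_image {v | EffDist star f v Q Q'}
    (fun v => ({u ∈ T | ¬ Nested star v u}).ncard) (Set.toFinite _) ⟨c0, hc0d, hc0m⟩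
  refine ⟨c, hcC, ?_⟩
  by_contra hnot
  push_neg at hnot
  obtain ⟨t₀, ht₀T, ht₀x⟩ := hnot
  obtain ⟨⟨Pa, hPaPs, Pb, hPbPs, heffab⟩, hlow⟩ := hTlow t₀ ht₀T
  have flow : f t₀ ≤ f c := hlow c hcC.1
  have hQp := hprof Q hQ
  have hQ'p := hprof Q' hQ'
  obtain ⟨kQ, hkQ⟩ := hQp
  obtain ⟨kQ', hkQ'⟩ := hQ'p
  -- f c is below both bounds
  have hfcQ : f c < (kQ : ℝ) := by
    rcases hcC.1 with ⟨h1, _⟩ | ⟨h1, _⟩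
    · exact mem_lt_of_profile hkQ h1
    · have := mem_lt_of_profile hkQ h1
      rwa [hfstar] at this
  have hfcQ' : f c < (kQ' : ℝ) := by
    rcases hcC.1 with ⟨_, h1⟩ | ⟨_, h1⟩
    · have := mem_lt_of_profile hkQ' h1
      rwa [hfstar] at this
    · exact mem_lt_of_profile hkQ' h1
  -- contradiction derivations
  have count0 : ∀ t', EffDist star f t' Q Q' → (∀ u ∈ T, Nested star t' u) → False := by
    intro t' he' hall
    have h0 : {u ∈ T | ¬ Nested star t' u} = ∅ := by
      ext u
      simp only [Set.mem_setOf_eq, Set.mem_empty_iff_false, iff_false, not_and, not_not]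
      exact fun hu => hall u hu
    have hle := hcm t' he'
    rw [h0, Set.ncard_empty] at hle
    have h0' : {u ∈ T | ¬ Nested star c u} = ∅ :=
      (Set.ncard_eq_zero (Set.toFinite _)).mp (Nat.le_zero.mp hle)
    have : t₀ ∈ ({u ∈ T | ¬ Nested star c u} : Set U) := ⟨ht₀T, ht₀x⟩
    rw [h0'] at this
    exact this
  have count : ∀ c', EffDist star f c' Q Q' → Nested star t₀ c' →
      (∀ u, Nested star u t₀ → Nested star u c → Nested star u c') → False := by
    intro c' he' hn' hker
    have hsub : {u ∈ T | ¬ Nested star c' u} ⊂ {u ∈ T | ¬ Nested star c u} := by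
      constructor
      · rintro u ⟨huT, hnc'⟩
        refine ⟨huT, fun hncu => hnc' ?_⟩
        by_cases hu : u = t₀
        · subst hu
          exact nested_symm h hn'
        · exact nested_symm h (hker u (hTnest u huT t₀ ht₀T) (nested_symm h hncu))
      · intro hss
        have : t₀ ∈ ({u ∈ T | ¬ Nested star c' u} : Set U) := hss ⟨ht₀T, ht₀x⟩
        exact this.2 (nested_symm h hn')
    have hlt := Set.ncard_lt_ncard hsub (Set.toFinite _)
    exact absurd (hcm c' he') (not_le.mpr hlt)
  -- orient t₀ in Q and Q'
  have ht₀Q : f t₀ < (kQ : ℝ) := flow.trans_lt hfcQ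
  have ht₀Q' : f t₀ < (kQ' : ℝ) := flow.trans_lt hfcQ'
  have hPap := hprof Pa hPaPs
  have hPbp := hprof Pb hPbPs
  have hrobA := hrobust Pa hPaPs
  have hrobB := hrobust Pb hPbPs
  have hQpi : IsProfileIn star f Q := ⟨kQ, hkQ⟩
  have hQ'pi : IsProfileIn star f Q' := ⟨kQ', hkQ'⟩
  rcases (hkQ.1.2 t₀ ht₀Q).1 with hA | hA <;> rcases (hkQ'.1.2 t₀ ht₀Q').1 with hB | hB
  · -- t₀ ∈ Q, t₀ ∈ Q' : uncross with r := t₀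
    obtain ⟨c', he', hn', hker⟩ := corner_full h hfstar hfsub hPap hPbp hQpi hQ'pi
      hrobA hrobB heffab hcC flow (fun hn => ht₀x (nested_symm h hn)) hA hB
    exact count c' he' hn' hker
  · -- t₀ ∈ Q, star t₀ ∈ Q' : t₀ distinguishes Q, Q'
    exact count0 t₀ ⟨Or.inl ⟨hA, hB⟩, fun v hv => hlow v hv⟩
      (fun u hu => hTnest t₀ ht₀T u hu)
  · -- star t₀ ∈ Q, t₀ ∈ Q'
    exact count0 t₀ ⟨Or.inr ⟨hA, hB⟩, fun v hv => hlow v hv⟩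
      (fun u hu => hTnest t₀ ht₀T u hu)
  · -- star t₀ ∈ Q, star t₀ ∈ Q' : uncross with r := star t₀
    have heffab' : EffDist star f (star t₀) Pa Pb := (effdist_star h hfstar).mpr heffab
    have flow' : f (star t₀) ≤ f c := by rwa [hfstar]
    have hx' : ¬ Nested star (star t₀) c := fun hn =>
      ht₀x (nested_symm h ((nested_star_left h).mpr hn))
    obtain ⟨c', he', hn', hker⟩ := corner_full h hfstar hfsub hPap hPbp hQpi hQ'pi
      hrobA hrobB heffab' hcC flow' hx' hA hB
    refine count c' he' ((nested_star_left h).mpr hn') fun u hu huc =>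
      hker u ((nested_star_right h).mp hu) huc
  
end Part2

/-- **Non-canonical tangle-tree theorem for submodular universes.** -/
theorem tangle_tree_submodular_universe [Lattice U] [Fintype U]
    (star : U → U) (hstar : OrderReversingInvolution star)
    (f : U → ℝ) (hf0 : ∀ s : U, 0 ≤ f s) (hfstar : ∀ s : U, f (star s) = f s)
    (hfsub : ∀ r s : U, f (r ⊔ s) + f (r ⊓ s) ≤ f r + f s)
    (Ps : Set (Set U))
    (hprof : ∀ P ∈ Ps, IsProfileIn star f P)
    (hrobust : ∀ P ∈ Ps, RobustProfile star f P) :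
    ∃ T : Set U,
      (∀ a ∈ T, ∀ b ∈ T, Nested star a b) ∧
      -- (i) every two distinguishable profiles in `Ps` are efficiently
      -- distinguished by some separation in `T`
      (∀ P ∈ Ps, ∀ P' ∈ Ps, (∃ s, Distinguishes star s P P') →
        ∃ t ∈ T, EffDist star f t P P') ∧
      -- (ii) every separation in `T` efficiently distinguishes a pair of
      -- profiles in `Ps`
      (∀ t ∈ T, ∃ P ∈ Ps, ∃ P' ∈ Ps, EffDist star f t P P') ∧
      -- (iii) if all profiles in `Ps` are regular, then `T` is a regular
      -- tree set
      ((∀ P ∈ Ps, ∀ s ∈ P, ¬ s ≤ star s) →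
        (∀ t ∈ T, ¬ t ≤ star t ∧ ¬ star t ≤ t) ∧
        (∀ r ∈ T, (¬ ∃ t ∈ T, r < t ∧ r < star t) ∧
                  (¬ ∃ t ∈ T, star r < t ∧ star r < star t))) := by
  classical
  set D : Set (Set U × Set U) :=
    {p | p.1 ∈ Ps ∧ p.2 ∈ Ps ∧ ∃ s, Distinguishes star s p.1 p.2} with hD
  have key : ∀ n : ℕ, ∃ (S : Set (Set U × Set U)) (T : Set U),
      S ⊆ D ∧
      (∀ a ∈ T, ∀ b ∈ T, Nested star a b) ∧
      (∀ t ∈ T, ∃ p ∈ S, EffDist star f t p.1 p.2) ∧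
      (∀ p ∈ S, ∃ t ∈ T, EffDist star f t p.1 p.2) ∧
      (∀ t ∈ T, ∀ q ∈ D, q ∉ S → ∀ v, Distinguishes star v q.1 q.2 → f t ≤ f v) ∧
      (n ≤ S.ncard ∨ S = D) := by
    intro n
    induction n with
    | zero =>
      exact ⟨∅, ∅, by simp, by simp, by simp, by simp, by simp,
        Or.inl (Nat.zero_le _)⟩
    | succ n ih =>
      obtain ⟨S, T, h1, h2, h3, h4, h5, h6⟩ := ih
      rcases h6 with h6 | h6
      swap
      · exact ⟨S, T, h1, h2, h3, h4, h5, Or.inr h6⟩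
      by_cases hSD : D ⊆ S
      · exact ⟨S, T, h1, h2, h3, h4, h5, Or.inr (subset_antisymm h1 hSD)⟩
      · obtain ⟨q₀, hq₀D, hq₀S⟩ := Set.not_subset.mp hSD
        -- choose an unserved pair of minimal efficient order
        set E : Set ((Set U × Set U) × U) :=
          {qu | qu.1 ∈ D ∧ qu.1 ∉ S ∧ Distinguishes star qu.2 qu.1.1 qu.1.2} with hE
        obtain ⟨s₀, hs₀⟩ := hq₀D.2.2
        obtain ⟨⟨π, u⟩, ⟨hπD, hπS, hu⟩, hmin⟩ := Set.exists_min_image E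
          (fun qu => f qu.2) (Set.toFinite _) ⟨(q₀, s₀), hq₀D, hq₀S, hs₀⟩
        -- extend T by an efficient distinguisher of π nested with T
        obtain ⟨c, hce, hcn⟩ := extend hstar hfstar hfsub hprof hrobust T h2
          hπD.1 hπD.2.1
          (fun t ht => ⟨by
              obtain ⟨p, hpS, hpe⟩ := h3 t ht
              exact ⟨p.1, (h1 hpS).1, p.2, (h1 hpS).2.1, hpe⟩,
            fun v hv => h5 t ht π hπD hπS v hv⟩)
          hπD.2.2
        refine ⟨insert π S, insert c T, Set.insert_subset hπD h1, ?_, ?_, ?_, ?_, ?_⟩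
        · -- nestedness
          intro a ha b hb
          rcases Set.mem_insert_iff.mp ha with ha | ha <;>
            rcases Set.mem_insert_iff.mp hb with hb | hb
          · rw [ha, hb]; exact nested_refl c
          · rw [ha]; exact hcn b hb
          · rw [hb]; exact nested_symm hstar (hcn a ha)
          · exact h2 a ha b hb
        · -- every member of insert c T serves a pair in insert π S
          intro t ht
          rcases Set.mem_insert_iff.mp ht with ht | ht
          · rw [ht]; exact ⟨π, Set.mem_insert _ _, hce⟩
          · obtain ⟨p, hpS, hpe⟩ := h3 t ht
            exact ⟨p, Set.mem_insert_of_mem _ hpS, hpe⟩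
        · -- every pair in insert π S is served
          intro p hp
          rcases Set.mem_insert_iff.mp hp with hp | hp
          · rw [hp]; exact ⟨c, Set.mem_insert _ _, hce⟩
          · obtain ⟨t, htT, hte⟩ := h4 p hp
            exact ⟨t, Set.mem_insert_of_mem _ htT, hte⟩
        · -- the lower-segment condition
          intro t ht q hq hqS v hv
          have hqS' : q ∉ S := fun hc' => hqS (Set.mem_insert_of_mem _ hc')
          rcases Set.mem_insert_iff.mp ht with ht | ht
          · rw [ht]
            exact (hce.2 u hu).trans (hmin (q, v) ⟨hq, hqS', hv⟩)
          · exact h5 t ht q hq hqS' v hv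
        · -- cardinality
          left
          rw [Set.ncard_insert_of_notMem hπS (Set.toFinite S)]
          omega
  obtain ⟨S, T, h1, h2, h3, h4, h5, h6⟩ := key D.ncard
  have hSD : S = D := by
    rcases h6 with h6 | h6
    · exact Set.eq_of_subset_of_ncard_le h1 h6 (Set.toFinite D)
    · exact h6
  subst hSD
  refine ⟨T, h2, ?_, ?_, ?_⟩
  · intro P hP P' hP' hd
    obtain ⟨t, htT, hte⟩ := h4 (P, P') ⟨hP, hP', hd⟩
    exact ⟨t, htT, hte⟩
  · intro t ht
    obtain ⟨p, hpS, hpe⟩ := h3 t ht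
    exact ⟨p.1, (h1 hpS).1, p.2, (h1 hpS).2.1, hpe⟩
  · intro hreg
    have part1 : ∀ t ∈ T, ¬ t ≤ star t ∧ ¬ star t ≤ t := by
      intro t ht
      obtain ⟨p, hpS, hpe⟩ := h3 t ht
      have hp1 : p.1 ∈ Ps := (h1 hpS).1
      have hp2 : p.2 ∈ Ps := (h1 hpS).2.1
      rcases hpe.1 with ⟨hA, hB⟩ | ⟨hA, hB⟩
      · refine ⟨hreg p.1 hp1 t hA, fun hle => hreg p.2 hp2 (star t) hB ?_⟩
        rwa [hstar.1]
      · refine ⟨hreg p.2 hp2 t hB, fun hle => hreg p.1 hp1 (star t) hA ?_⟩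
        rwa [hstar.1]
    refine ⟨part1, fun r hr => ⟨?_, ?_⟩⟩
    · rintro ⟨t, htT, hlt1, hlt2⟩
      have h8 : t ≤ star r := (le_star_iff hstar).mp hlt2.le
      exact (part1 r hr).1 (hlt1.le.trans h8)
    · rintro ⟨t, htT, hlt1, hlt2⟩
      have h8 : t ≤ r := (starLeStarIff hstar).mp hlt2.le
      exact (part1 r hr).2 (hlt1.le.trans h8)
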